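/- arXiv:1805.04984 — 2 statements merged into one kernel-verified Lean document; each statement's English description precedes it below -/
import Mathlib

section
/- Let α_1 < ... < α_n (n ≥ 2), 2 ≤ k ≤ n, and let i_1 < i_2 < ... < i_{k-1} be indices of the k-1 largest gaps α_{i+1} - α_i. Then the k-partition S_j = {v_{i_{j-1}+1},...,v_{i_j}} (with i_0 = 0, i_k = n) minimizes Σ_{j=1}^k range(S_j) over all k-partitions of V. -/
open Finset

noncomputable def rng {n : ℕ} (α : Fin n → ℝ) (S : Finset (Fin n)) : ℝ :=
  if h : S.Nonempty then S.sup' h α - S.inf' h α else 0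

def IsPartition {n k : ℕ} (P : Fin k → Finset (Fin n)) : Prop :=
  (∀ i, (P i).Nonempty) ∧ (∀ i j, i ≠ j → Disjoint (P i) (P j)) ∧
    (∀ v : Fin n, ∃ i, v ∈ P i)

/-- The gap `α_{t+1} - α_t` (0-based `t`). -/
noncomputable def gap {n : ℕ} (α : Fin n → ℝ) (t : ℕ) : ℝ :=
  if h : t + 1 < n then α ⟨t + 1, h⟩ - α ⟨t, by omega⟩ else 0

section Aux

variable {n : ℕ}

lemma gap_nonneg (α : Fin n → ℝ) (hα : StrictMono α) (t : ℕ) : 0 ≤ gap α t := by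
  unfold gap
  split
  · rename_i h
    have hlt : (⟨t, by omega⟩ : Fin n) < ⟨t + 1, h⟩ := by
      simp [Fin.lt_def]
    have := hα hlt
    linarith
  · exact le_refl 0

lemma range_gap_sum' (α : Fin n → ℝ) (v : Fin n) :
    ∑ t ∈ Finset.range v.val, gap α t = α v - α ⟨0, v.pos⟩ := by
  have hn : 0 < n := v.pos
  have hlt : ∀ m : ℕ, min m (n - 1) < n := fun m => by omega
  have key : ∀ t : ℕ, gap α t =
      α ⟨min (t + 1) (n - 1), hlt (t + 1)⟩ - α ⟨min t (n - 1), hlt t⟩ := by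
    intro t
    by_cases h : t + 1 < n
    · simp only [gap, dif_pos h]
      have h1 : min (t + 1) (n - 1) = t + 1 := by omega
      have h2 : min t (n - 1) = t := by omega
      congr 1
      · exact congrArg α (Fin.ext (by simp [h1]))
      · exact congrArg α (Fin.ext (by simp [h2]))
    · have h' : min (t + 1) (n - 1) = min t (n - 1) := by omega
      simp [gap, h, h']
  rw [Finset.sum_congr rfl fun t _ => key t,
    Finset.sum_range_sub (fun m => α ⟨min m (n - 1), hlt m⟩) v.val]
  have hv : v.val < n := v.isLt
  congr 1
  · exact congrArg α (Fin.ext (by simp; omega))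

lemma sup'_eq (α : Fin n → ℝ) (hα : StrictMono α) (S : Finset (Fin n)) (h : S.Nonempty) :
    S.sup' h α = α (S.max' h) :=
  le_antisymm (Finset.sup'_le h α fun b hb => hα.monotone (S.le_max' b hb))
    (Finset.le_sup' α (S.max'_mem h))

lemma inf'_eq (α : Fin n → ℝ) (hα : StrictMono α) (S : Finset (Fin n)) (h : S.Nonempty) :
    S.inf' h α = α (S.min' h) :=
  le_antisymm (Finset.inf'_le α (S.min'_mem h))
    (Finset.le_inf' h α fun b hb => hα.monotone (S.min'_le b hb))

lemma rng_eq (α : Fin n → ℝ) (hα : StrictMono α) (S : Finset (Fin n)) (h : S.Nonempty) :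
    rng α S = ∑ t ∈ Finset.range (S.max' h).val, gap α t -
      ∑ t ∈ Finset.range (S.min' h).val, gap α t := by
  rw [rng, dif_pos h, sup'_eq α hα S h, inf'_eq α hα S h,
    range_gap_sum' α (S.max' h), range_gap_sum' α (S.min' h)]
  ring

lemma my_sum_biUnion_le {ι : Type*} [DecidableEq ι] (s : Finset ι) (t : ι → Finset ℕ)
    (g : ℕ → ℝ) (hg : ∀ x, 0 ≤ g x) :
    ∑ x ∈ s.biUnion t, g x ≤ ∑ i ∈ s, ∑ x ∈ t i, g x := by
  classical
  induction s using Finset.induction_on with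
  | empty => simp
  | insert _ _ hna ih =>
    rename_i a s'
    rw [Finset.biUnion_insert, Finset.sum_insert hna]
    have h1 : ∑ x ∈ t a ∪ s'.biUnion t, g x
        = ∑ x ∈ t a, g x + ∑ x ∈ (s'.biUnion t) \ t a, g x := by
      rw [← Finset.sum_union Finset.disjoint_sdiff, Finset.union_sdiff_self_eq_union]
    have h2 : ∑ x ∈ (s'.biUnion t) \ t a, g x ≤ ∑ x ∈ s'.biUnion t, g x :=
      Finset.sum_le_sum_of_subset_of_nonneg Finset.sdiff_subset (fun x _ _ => hg x)
    linarith

lemma my_sum_le_sum (g : ℕ → ℝ) (hg : ∀ x, 0 ≤ g x) (U C : Finset ℕ)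
    (hcard : U.card ≤ C.card)
    (hcmp : ∀ u ∈ U, u ∉ C → ∀ c ∈ C, g u ≤ g c) :
    ∑ x ∈ U, g x ≤ ∑ x ∈ C, g x := by
  classical
  have hU : ∑ x ∈ U, g x = ∑ x ∈ U \ C, g x + ∑ x ∈ U ∩ C, g x := by
    rw [← Finset.sum_union (Finset.disjoint_sdiff_inter _ _), Finset.sdiff_union_inter]
  have hC : ∑ x ∈ C, g x = ∑ x ∈ C \ U, g x + ∑ x ∈ C ∩ U, g x := by
    rw [← Finset.sum_union (Finset.disjoint_sdiff_inter _ _), Finset.sdiff_union_inter]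
  have hic : ∑ x ∈ U ∩ C, g x = ∑ x ∈ C ∩ U, g x := by rw [Finset.inter_comm]
  have hcards : (U \ C).card ≤ (C \ U).card := by
    have h1 := Finset.card_sdiff_add_card_inter U C
    have h2 := Finset.card_sdiff_add_card_inter C U
    have h3 : (U ∩ C).card = (C ∩ U).card := by rw [Finset.inter_comm]
    omega
  have key : ∑ x ∈ U \ C, g x ≤ ∑ x ∈ C \ U, g x := by
    rcases Finset.eq_empty_or_nonempty (U \ C) with he | hne
    · rw [he, Finset.sum_empty]
      exact Finset.sum_nonneg fun x _ => hg x
    · have hCU : (C \ U).Nonempty := by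
        rw [← Finset.card_pos]
        have := Finset.card_pos.mpr hne
        omega
      set b := (C \ U).inf' hCU g with hb
      have hb0 : 0 ≤ b := by
        obtain ⟨c, hc, hceq⟩ := Finset.exists_mem_eq_inf' hCU g
        rw [hb, hceq]; exact hg c
      have h1 : ∑ x ∈ U \ C, g x ≤ (U \ C).card • b := by
        apply Finset.sum_le_card_nsmul
        intro x hx
        apply Finset.le_inf' hCU
        intro c hc
        exact hcmp x (Finset.mem_sdiff.mp hx).1 (Finset.mem_sdiff.mp hx).2 c
          (Finset.mem_sdiff.mp hc).1
      have h2 : (U \ C).card • b ≤ (C \ U).card • b := by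
        rw [nsmul_eq_mul, nsmul_eq_mul]
        exact mul_le_mul_of_nonneg_right (by exact_mod_cast hcards) hb0
      have h3 : (C \ U).card • b ≤ ∑ x ∈ C \ U, g x :=
        Finset.card_nsmul_le_sum _ _ _ (fun x hx => Finset.inf'_le g hx)
      linarith
  linarith

end Aux

/-- If the cut points `e 1 < … < e (k-1)` are placed at the `k-1` largest gaps (every gap
cut at is at least as large as every gap not cut at), then the resulting consecutive-block
`k`-partition minimizes `Σ range(Sⱼ)` over all `k`-partitions. A cut at position `c`
(with `1 ≤ c ≤ n-1`) separates elements `c-1` and `c`, whose gap is `gap α (c-1)`. -/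
theorem stmt11 (n : ℕ) (hn : 2 ≤ n) (α : Fin n → ℝ) (hα : StrictMono α)
    (k : ℕ) (hk : 2 ≤ k) (hkn : k ≤ n)
    (e : ℕ → ℕ) (he0 : e 0 = 0) (hek : e k = n) (hmono : ∀ j < k, e j < e (j + 1))
    (hgap : ∀ j, 1 ≤ j → j < k → ∀ s, 1 ≤ s → s < n →
      (∀ j', 1 ≤ j' → j' < k → e j' ≠ s) → gap α (s - 1) ≤ gap α (e j - 1)) :
    IsPartition (fun j : Fin k => univ.filter (fun v : Fin n =>
        e j.val ≤ v.val ∧ v.val < e (j.val + 1))) ∧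
    ∀ Q : Fin k → Finset (Fin n), IsPartition Q →
      ∑ j : Fin k, rng α (univ.filter (fun v : Fin n =>
          e j.val ≤ v.val ∧ v.val < e (j.val + 1))) ≤
        ∑ j, rng α (Q j) := by
  classical
  -- monotonicity of e
  have hemono : ∀ b, b ≤ k → ∀ a, a ≤ b → e a ≤ e b := by
    intro b
    induction b with
    | zero =>
      intro _ a ha
      have : a = 0 := by omega
      subst this; exact le_refl _
    | succ b ih =>
      intro hbk a ha
      rcases Nat.lt_or_ge a (b + 1) with h | h
      · exact le_trans (ih (by omega) a (by omega)) (le_of_lt (hmono b (by omega)))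
      · have : a = b + 1 := by omega
        subst this; exact le_refl _
  have hstrict : ∀ a b, a < b → b ≤ k → e a < e b := by
    intro a b hab hbk
    have hb : b - 1 + 1 = b := by omega
    have h1 : e a ≤ e (b - 1) := hemono (b - 1) (by omega) a (by omega)
    have h2 := hmono (b - 1) (by omega)
    rw [hb] at h2
    omega
  have hen : ∀ j, j ≤ k → e j ≤ n := by
    intro j hj
    rw [← hek]; exact hemono k le_rfl j hj
  have hen' : ∀ j, j < k → e j < n := by
    intro j hj
    rw [← hek]; exact hstrict j k hj le_rfl
  set P : Fin k → Finset (Fin n) := fun j : Fin k => univ.filter (fun v : Fin n =>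
      e j.val ≤ v.val ∧ v.val < e (j.val + 1)) with hP
  have hPmem : ∀ (j : Fin k) (v : Fin n), v ∈ P j ↔ e j.val ≤ v.val ∧ v.val < e (j.val + 1) := by
    intro j v
    simp [hP]
  -- nonempty
  have hPne : ∀ j : Fin k, (P j).Nonempty := by
    intro j
    refine ⟨⟨e j.val, hen' j.val j.isLt⟩, ?_⟩
    rw [hPmem]
    exact ⟨le_refl _, hmono j.val j.isLt⟩
  -- partition
  have hpart : IsPartition P := by
    refine ⟨hPne, ?_, ?_⟩
    · have hd : ∀ i j : Fin k, i.val < j.val → Disjoint (P i) (P j) := by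
        intro i j hij
        rw [Finset.disjoint_left]
        intro v hv1 hv2
        rw [hPmem] at hv1 hv2
        have : e (i.val + 1) ≤ e j.val := hemono j.val (le_of_lt j.isLt) (i.val + 1) (by omega)
        omega
      intro i j hij
      rcases lt_trichotomy i.val j.val with h | h | h
      · exact hd i j h
      · exact absurd (Fin.ext h) hij
      · exact (hd j i h).symm
    · have hcov : ∀ m, m ≤ k → ∀ v : Fin n, v.val < e m →
          ∃ j : Fin k, e j.val ≤ v.val ∧ v.val < e (j.val + 1) := by
        intro m
        induction m with
        | zero => intro _ v hv; rw [he0] at hv; omega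
        | succ m ih =>
          intro hm v hv
          rcases Nat.lt_or_ge v.val (e m) with h | h
          · exact ih (by omega) v h
          · exact ⟨⟨m, by omega⟩, h, hv⟩
      intro v
      obtain ⟨j, h1, h2⟩ := hcov k le_rfl v (by rw [hek]; exact v.isLt)
      exact ⟨j, by rw [hPmem]; exact ⟨h1, h2⟩⟩
  refine ⟨hpart, ?_⟩
  -- the cut set
  obtain ⟨k', rfl⟩ : ∃ k', k = k' + 1 := ⟨k - 1, by omega⟩
  set F : ℕ → ℝ := fun m => ∑ t ∈ Finset.range m, gap α t with hF
  set C : Finset ℕ := (Finset.range k').image (fun i => e (i + 1) - 1) with hCdef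
  have he1 : ∀ j, 1 ≤ j → j ≤ k' + 1 → 1 ≤ e j := by
    intro j h1 h2
    have := hstrict 0 j h1 h2
    omega
  have hCcard : C.card = k' := by
    rw [hCdef, Finset.card_image_of_injOn, Finset.card_range]
    intro a ha b hb hab
    simp only [Finset.mem_coe, Finset.mem_range] at ha hb
    have hab' : e (a + 1) - 1 = e (b + 1) - 1 := hab
    have ha1 : 1 ≤ e (a + 1) := he1 (a + 1) (by omega) (by omega)
    have hb1 : 1 ≤ e (b + 1) := he1 (b + 1) (by omega) (by omega)
    by_contra hne
    rcases Nat.lt_or_ge a b with h | h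
    · have := hstrict (a + 1) (b + 1) (by omega) (by omega); omega
    · have := hstrict (b + 1) (a + 1) (by omega) (by omega); omega
  have hCsub : ∀ c ∈ C, c < n - 1 := by
    intro c hc
    rw [hCdef, Finset.mem_image] at hc
    obtain ⟨i, hi, rfl⟩ := hc
    rw [Finset.mem_range] at hi
    have h1 : e (i + 1) < n := hen' (i + 1) (by omega)
    have h2 : 1 ≤ e (i + 1) := he1 (i + 1) (by omega) (by omega)
    omega
  have hgapC : ∀ t, t < n - 1 → t ∉ C → ∀ c ∈ C, gap α t ≤ gap α c := by
    intro t ht htC c hc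
    rw [hCdef, Finset.mem_image] at hc
    obtain ⟨i, hi, rfl⟩ := hc
    rw [Finset.mem_range] at hi
    have := hgap (i + 1) (by omega) (by omega) (t + 1) (by omega) (by omega) ?_
    · simpa using this
    · intro j' hj1 hj2 hje
      apply htC
      rw [hCdef, Finset.mem_image]
      refine ⟨j' - 1, Finset.mem_range.mpr (by omega), ?_⟩
      have : j' - 1 + 1 = j' := by omega
      rw [this, hje]
      omega
  -- value of the block partition sum
  have hFsucc : ∀ m, 1 ≤ m → F m = F (m - 1) + gap α (m - 1) := by
    intro m hm
    have h : m = (m - 1) + 1 := by omega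
    calc F m = F ((m - 1) + 1) := by rw [← h]
      _ = F (m - 1) + gap α (m - 1) := Finset.sum_range_succ (gap α) (m - 1)
  have hblockrng : ∀ j : Fin (k' + 1), rng α (P j) = F (e (j.val + 1)) - gap α (e (j.val + 1) - 1) - F (e j.val) := by
    intro j
    have hne := hPne j
    have hmax : ((P j).max' hne).val = e (j.val + 1) - 1 := by
      have h1 : ((P j).max' hne) ∈ P j := Finset.max'_mem _ _
      rw [hPmem] at h1
      have h2 : (⟨e (j.val + 1) - 1, by have := hen (j.val + 1) j.isLt; have := he1 (j.val + 1) (by omega) (by omega); omega⟩ : Fin n) ∈ P j := by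
        rw [hPmem]
        have ha := hmono j.val j.isLt
        constructor <;> simp <;> omega
      have h3 := Finset.le_max' (P j) _ h2
      have h4 : (⟨e (j.val + 1) - 1, _⟩ : Fin n).val ≤ ((P j).max' hne).val := h3
      simp at h4
      omega
    have hmin : ((P j).min' hne).val = e j.val := by
      have h1 : ((P j).min' hne) ∈ P j := Finset.min'_mem _ _
      rw [hPmem] at h1
      have h2 : (⟨e j.val, hen' j.val j.isLt⟩ : Fin n) ∈ P j := by
        rw [hPmem]
        exact ⟨le_refl _, hmono j.val j.isLt⟩
      have h3 := Finset.min'_le (P j) _ h2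
      have h4 : ((P j).min' hne).val ≤ e j.val := h3
      omega
    rw [rng_eq α hα (P j) hne, hmax, hmin]
    have h5 := hFsucc (e (j.val + 1)) (he1 (j.val + 1) (by omega) (by omega))
    rw [hF] at h5 ⊢
    simp only [] at h5 ⊢
    linarith
  have hblocksum : ∑ j : Fin (k' + 1), rng α (P j) = F n - ∑ c ∈ C, gap α c := by
    have h1 : ∑ j : Fin (k' + 1), rng α (P j)
        = ∑ j ∈ Finset.range (k' + 1), (F (e (j + 1)) - gap α (e (j + 1) - 1) - F (e j)) := by
      rw [← Fin.sum_univ_eq_sum_range]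
      exact Finset.sum_congr rfl fun j _ => hblockrng j
    rw [h1]
    have h2 : ∑ j ∈ Finset.range (k' + 1), (F (e (j + 1)) - gap α (e (j + 1) - 1) - F (e j))
        = (∑ j ∈ Finset.range (k' + 1), (F (e (j + 1)) - F (e j)))
          - ∑ j ∈ Finset.range (k' + 1), gap α (e (j + 1) - 1) := by
      rw [← Finset.sum_sub_distrib]
      exact Finset.sum_congr rfl fun j _ => by ring
    rw [h2, Finset.sum_range_sub (fun i => F (e i)), hek, he0]
    have hF0 : F 0 = 0 := by simp [hF]
    have h3 : ∑ j ∈ Finset.range (k' + 1), gap α (e (j + 1) - 1)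
        = ∑ j ∈ Finset.range k', gap α (e (j + 1) - 1) + gap α (e (k' + 1) - 1) :=
      Finset.sum_range_succ (fun j => gap α (e (j + 1) - 1)) k'
    have h4 : gap α (e (k' + 1) - 1) = 0 := by
      rw [hek]
      have : ¬ (n - 1 + 1 < n) := by omega
      simp [gap, this]
    have h5 : ∑ c ∈ C, gap α c = ∑ j ∈ Finset.range k', gap α (e (j + 1) - 1) := by
      rw [hCdef]
      rw [Finset.sum_image]
      intro a ha b hb hab
      rw [Finset.mem_coe, Finset.mem_range] at ha hb
      have hab' : e (a + 1) - 1 = e (b + 1) - 1 := hab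
      have ha1 : 1 ≤ e (a + 1) := he1 (a + 1) (by omega) (by omega)
      have hb1 : 1 ≤ e (b + 1) := he1 (b + 1) (by omega) (by omega)
      by_contra hne
      rcases Nat.lt_or_ge a b with h | h
      · have := hstrict (a + 1) (b + 1) (by omega) (by omega); omega
      · have := hstrict (b + 1) (a + 1) (by omega) (by omega); omega
    rw [h3, h4, h5, hF0]
    ring
  have hFn : F n = F (n - 1) := by
    have := hFsucc n (by omega)
    have h0 : gap α (n - 1) = 0 := by
      have : ¬ (n - 1 + 1 < n) := by omega
      simp [gap, this]
    rw [this, h0, add_zero]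
  -- lower bound for arbitrary partitions
  intro Q hQ
  obtain ⟨hQne, hQdisj, hQcov⟩ := hQ
  set mn : Fin (k' + 1) → Fin n := fun j => (Q j).min' (hQne j) with hmn
  set mx : Fin (k' + 1) → Fin n := fun j => (Q j).max' (hQne j) with hmx
  have hrngQ : ∀ j, rng α (Q j) = ∑ t ∈ Finset.Ico (mn j).val (mx j).val, gap α t := by
    intro j
    have hle : (mn j).val ≤ (mx j).val :=
      Fin.le_def.mp (Finset.min'_le _ _ (Finset.max'_mem _ _))
    rw [rng_eq α hα (Q j) (hQne j), Finset.sum_Ico_eq_sub _ hle]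
  set B : Finset ℕ := Finset.univ.biUnion (fun j : Fin (k' + 1) =>
      Finset.Ico (mn j).val (mx j).val) with hB
  have hQsum : ∑ c ∈ B, gap α c ≤ ∑ j, rng α (Q j) := by
    calc ∑ c ∈ B, gap α c
        ≤ ∑ j : Fin (k' + 1), ∑ t ∈ Finset.Ico (mn j).val (mx j).val, gap α t :=
          my_sum_biUnion_le _ _ _ (gap_nonneg α hα)
      _ = ∑ j, rng α (Q j) := Finset.sum_congr rfl fun j _ => (hrngQ j).symm
  have hBsub : B ⊆ Finset.range (n - 1) := by
    intro t ht
    rw [hB, Finset.mem_biUnion] at ht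
    obtain ⟨j, _, hj⟩ := ht
    rw [Finset.mem_Ico] at hj
    rw [Finset.mem_range]
    have := (mx j).isLt
    omega
  set U : Finset ℕ := Finset.range (n - 1) \ B with hU
  have hsplit : ∑ c ∈ B, gap α c = F (n - 1) - ∑ c ∈ U, gap α c := by
    have := Finset.sum_sdiff (f := fun c => gap α c) hBsub
    rw [hF]
    simp only []
    rw [hU]
    linarith
  -- card U ≤ k'
  have hlast : (⟨n - 1, by omega⟩ : Fin n) ∈ Q ((hQcov ⟨n - 1, by omega⟩).choose) :=
    (hQcov ⟨n - 1, by omega⟩).choose_spec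
  set j0 : Fin (k' + 1) := (hQcov ⟨n - 1, by omega⟩).choose with hj0
  set f : ℕ → Fin (k' + 1) := fun t =>
    if h : t < n then (hQcov ⟨t, h⟩).choose else j0 with hf
  have hfkey : ∀ t ∈ U, t = (mx (f t)).val ∧ t < n - 1 := by
    intro t ht
    rw [hU, Finset.mem_sdiff, Finset.mem_range] at ht
    obtain ⟨ht1, ht2⟩ := ht
    have htn : t < n := by omega
    have hmem : (⟨t, htn⟩ : Fin n) ∈ Q (f t) := by
      rw [hf]
      simp only [dif_pos htn]
      exact (hQcov ⟨t, htn⟩).choose_spec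
    have hle : t ≤ (mx (f t)).val := Finset.le_max' _ _ hmem
    have hge : (mn (f t)).val ≤ t := Finset.min'_le _ _ hmem
    have hnotB : ¬ ((mn (f t)).val ≤ t ∧ t < (mx (f t)).val) := by
      intro hcon
      apply ht2
      rw [hB, Finset.mem_biUnion]
      exact ⟨f t, Finset.mem_univ _, Finset.mem_Ico.mpr hcon⟩
    constructor
    · omega
    · exact ht1
  have hUcard : U.card ≤ k' := by
    have hinj : Set.InjOn f U := by
      intro t1 h1 t2 h2 heq
      have k1 := hfkey t1 h1
      have k2 := hfkey t2 h2
      rw [k1.1, k2.1, heq]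
    have hmaps : ∀ t ∈ U, f t ∈ Finset.univ.erase j0 := by
      intro t ht
      rw [Finset.mem_erase]
      refine ⟨?_, Finset.mem_univ _⟩
      intro hcon
      have k1 := hfkey t ht
      have : (n - 1 : ℕ) ≤ (mx (f t)).val := by
        rw [hcon]
        exact Finset.le_max' _ _ hlast
      omega
    have := Finset.card_le_card_of_injOn f hmaps hinj
    rwa [Finset.card_erase_of_mem (Finset.mem_univ _), Finset.card_univ, Fintype.card_fin] at this
  have hUC : ∑ c ∈ U, gap α c ≤ ∑ c ∈ C, gap α c := by
    apply my_sum_le_sum _ (gap_nonneg α hα) _ _ (by omega)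
    intro u hu huC c hc
    rw [hU, Finset.mem_sdiff, Finset.mem_range] at hu
    exact hgapC u hu.1 huC c hc
  have hfinal : ∑ j : Fin (k' + 1), rng α (P j) ≤ ∑ j, rng α (Q j) := by
    rw [hblocksum, hFn]
    linarith
  exact hfinal
end

section
/- Let f : ℕ → ℝ be positive and non-decreasing and α_1 < ... < α_n (n ≥ 2), 2 ≤ k ≤ n. There is an optimal k-partition (S_1,...,S_k) minimizing Σ_i range(S_i)/f(|S_i|) in which the sets are non-overlapping in values: for some indexing, max(S_i) < min(S_{i+1}) for all i = 1,...,k-1. -/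
open Finset

/-- Separated partitions: parts are pairwise comparable blocks of values. -/
def SepP {n k : ℕ} (P : Fin k → Finset (Fin n)) : Prop :=
  ∀ i j, i ≠ j → (∀ a ∈ P i, ∀ b ∈ P j, a < b) ∨ (∀ a ∈ P i, ∀ b ∈ P j, b < a)

/-- Positional range of a single set. -/
noncomputable def phiS {n : ℕ} (S : Finset (Fin n)) : ℕ :=
  if h : S.Nonempty then (S.max' h).val - (S.min' h).val else 0

/-- Total positional range potential. -/
noncomputable def Phi {n k : ℕ} (P : Fin k → Finset (Fin n)) : ℕ := ∑ i, phiS (P i)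

lemma rng_eq_s15 {n : ℕ} (α : Fin n → ℝ) (S : Finset (Fin n)) (h : S.Nonempty) :
    rng α S = S.sup' h α - S.inf' h α := dif_pos h

lemma phiS_eq {n : ℕ} (S : Finset (Fin n)) (h : S.Nonempty) :
    phiS S = (S.max' h).val - (S.min' h).val := dif_pos h

lemma rng_nonneg {n : ℕ} (α : Fin n → ℝ) (S : Finset (Fin n)) : 0 ≤ rng α S := by
  unfold rng
  split_ifs with h
  · obtain ⟨x, hx⟩ := h
    have h1 := Finset.inf'_le α hx
    have h2 := Finset.le_sup' α hx
    linarith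
  · exact le_refl 0

lemma sup'_alpha {n : ℕ} (α : Fin n → ℝ) (hα : StrictMono α) (S : Finset (Fin n))
    (h : S.Nonempty) : S.sup' h α = α (S.max' h) := by
  apply le_antisymm
  · exact Finset.sup'_le h α fun b hb => hα.monotone (S.le_max' b hb)
  · exact Finset.le_sup' α (S.max'_mem h)

lemma inf'_alpha {n : ℕ} (α : Fin n → ℝ) (hα : StrictMono α) (S : Finset (Fin n))
    (h : S.Nonempty) : S.inf' h α = α (S.min' h) := by
  apply le_antisymm
  · exact Finset.inf'_le α (S.min'_mem h)
  · exact Finset.le_inf' h α fun b hb => hα.monotone (S.min'_le b hb)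

/-- Splitting a finset into its `a` smallest elements and the rest. -/
lemma split_finset {n : ℕ} (U : Finset (Fin n)) (a : ℕ) (ha : a ≤ U.card) :
    ∃ C D : Finset (Fin n), C ∪ D = U ∧ Disjoint C D ∧ C.card = a ∧
      ∀ u ∈ C, ∀ v ∈ D, u < v := by
  classical
  set L := U.sort (· ≤ ·) with hL
  have hlen : L.length = U.card := U.length_sort _
  have hsorted : List.Pairwise (· < ·) L := U.sortedLT_sort.pairwise
  have hnd : L.Nodup := hsorted.nodup
  refine ⟨(L.take a).toFinset, (L.drop a).toFinset, ?_, ?_, ?_, ?_⟩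
  · rw [← List.toFinset_append, List.take_append_drop]
    exact U.sort_toFinset _
  · rw [Finset.disjoint_left]
    intro x hx hx'
    rw [List.mem_toFinset] at hx hx'
    exact lt_irrefl x (hsorted.rel_of_mem_take_of_mem_drop hx hx')
  · rw [List.toFinset_card_of_nodup (hnd.sublist (List.take_sublist a L))]
    rw [List.length_take, hlen]
    omega
  · intro u hu v hv
    rw [List.mem_toFinset] at hu hv
    exact hsorted.rel_of_mem_take_of_mem_drop hu hv

lemma pair_step {n : ℕ} (α : Fin n → ℝ) (hα : StrictMono α) (f : ℕ → ℝ)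
    (hfpos : ∀ m : ℕ, 0 < m → 0 < f m) (hfmono : Monotone f)
    (A B : Finset (Fin n)) (hA : A.Nonempty) (hB : B.Nonempty) (hd : Disjoint A B)
    (h1 : A.min' hA < B.min' hB) (h2 : B.min' hB < A.max' hA) :
    ∃ C D : Finset (Fin n), C.Nonempty ∧ D.Nonempty ∧ Disjoint C D ∧ C ∪ D = A ∪ B ∧
      rng α C / f C.card + rng α D / f D.card ≤
        rng α A / f A.card + rng α B / f B.card ∧
      phiS C + phiS D < phiS A + phiS B := by
  classical
  set a0 := A.min' hA with ha0
  set a1 := A.max' hA with ha1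
  set b0 := B.min' hB with hb0
  set b1 := B.max' hB with hb1
  have hAcard : 0 < A.card := Finset.card_pos.mpr hA
  have hBcard : 0 < B.card := Finset.card_pos.mpr hB
  have hUmin : ∀ u ∈ A ∪ B, a0 ≤ u := by
    intro u hu
    rcases Finset.mem_union.mp hu with h | h
    · exact A.min'_le u h
    · exact le_trans h1.le (B.min'_le u h)
  have ha01 : a0 < a1 := lt_trans h1 h2
  have hfA : 0 < f A.card := hfpos _ hAcard
  have hfB : 0 < f B.card := hfpos _ hBcard
  have ha1b1 : a1 ≠ b1 := by
    intro h
    have hmem : a1 ∈ B := by rw [h, hb1]; exact B.max'_mem hB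
    exact (Finset.disjoint_left.mp hd (A.max'_mem hA)) hmem
  rcases ha1b1.lt_or_gt with hcase | hcase
  · -- overlap case : a1 < b1, split A ∪ B into |A| smallest and the rest
    have hUcard : (A ∪ B).card = A.card + B.card := Finset.card_union_of_disjoint hd
    have haU : A.card ≤ (A ∪ B).card := by omega
    obtain ⟨C, D, hunion, hdisj, hcardC, hlt⟩ := split_finset (A ∪ B) A.card haU
    have hcardD : D.card = B.card := by
      have := Finset.card_union_of_disjoint hdisj
      rw [hunion, hUcard] at this
      omega
    have hCne : C.Nonempty := Finset.card_pos.mp (by omega)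
    have hDne : D.Nonempty := Finset.card_pos.mp (by omega)
    have hCU : C ⊆ A ∪ B := hunion ▸ Finset.subset_union_left
    have hDU : D ⊆ A ∪ B := hunion ▸ Finset.subset_union_right
    -- every element of C is < a1
    have hClt : ∀ c ∈ C, c < a1 := by
      intro c hc
      by_contra hcon
      push_neg at hcon
      set W : Finset (Fin n) := insert b0 (A.erase a1) with hW
      have hWcard : W.card = A.card := by
        rw [hW, Finset.card_insert_of_notMem, Finset.card_erase_of_mem (A.max'_mem hA)]
        · omega
        · intro hmem
          exact (Finset.disjoint_left.mp hd (Finset.mem_of_mem_erase hmem)) (B.min'_mem hB)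
      have hWlt : ∀ w ∈ W, w < a1 := by
        intro w hw
        rcases Finset.mem_insert.mp hw with h | h
        · exact h ▸ h2
        · exact lt_of_le_of_ne (A.le_max' w (Finset.mem_of_mem_erase h))
            (Finset.ne_of_mem_erase h)
      have hWU : W ⊆ A ∪ B := by
        intro w hw
        rcases Finset.mem_insert.mp hw with h | h
        · exact h ▸ Finset.mem_union_right _ (B.min'_mem hB)
        · exact Finset.mem_union_left _ (Finset.mem_of_mem_erase h)
      have hWC : W ⊆ C := by
        intro w hw
        rcases Finset.mem_union.mp ((hunion ▸ hWU hw) : w ∈ C ∪ D) with h | h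
        · exact h
        · exact absurd (hlt c hc w h) (by
            have := lt_of_lt_of_le (hWlt w hw) hcon
            omega)
      have hcW : c ∉ W := fun h => absurd (hWlt c h) (by omega)
      have : W.card + 1 ≤ C.card := by
        have : insert c W ⊆ C := Finset.insert_subset hc hWC
        calc W.card + 1 = (insert c W).card := (Finset.card_insert_of_notMem hcW).symm
          _ ≤ C.card := Finset.card_le_card this
      omega
    -- every element of D is ≥ b0
    have hDge : ∀ d ∈ D, b0 ≤ d := by
      intro d hd'
      by_contra hcon
      push_neg at hcon
      have hsub : insert d C ⊆ A.erase a1 := by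
        intro x hx
        have hxlt : x < b0 := by
          rcases Finset.mem_insert.mp hx with h | h
          · exact h ▸ hcon
          · exact lt_trans (hlt x h d hd') hcon
        have hxU : x ∈ A ∪ B := by
          rcases Finset.mem_insert.mp hx with h | h
          · exact h ▸ hDU hd'
          · exact hCU h
        have hxA : x ∈ A := by
          rcases Finset.mem_union.mp hxU with h | h
          · exact h
          · exact absurd (B.min'_le x h) (by omega)
        exact Finset.mem_erase.mpr ⟨fun h => absurd (h ▸ hxlt) (by
          have := h2; omega), hxA⟩
      have hdC : d ∉ C := Finset.disjoint_right.mp hdisj hd'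
      have : C.card + 1 ≤ (A.erase a1).card := by
        calc C.card + 1 = (insert d C).card := (Finset.card_insert_of_notMem hdC).symm
          _ ≤ _ := Finset.card_le_card hsub
      rw [Finset.card_erase_of_mem (A.max'_mem hA)] at this
      omega
    -- a0 ∈ C
    have ha0U : a0 ∈ A ∪ B := Finset.mem_union_left _ (A.min'_mem hA)
    have ha0C : a0 ∈ C := by
      rcases Finset.mem_union.mp (hunion ▸ ha0U : a0 ∈ C ∪ D) with h | h
      · exact h
      · obtain ⟨c, hc⟩ := hCne
        exact absurd (hlt c hc a0 h) (not_lt.mpr (hUmin c (hCU hc)))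
    -- b1 ∈ D
    have hb1U : b1 ∈ A ∪ B := Finset.mem_union_right _ (B.max'_mem hB)
    have hb1D : b1 ∈ D := by
      rcases Finset.mem_union.mp (hunion ▸ hb1U : b1 ∈ C ∪ D) with h | h
      · exact absurd (hClt b1 h) (not_lt.mpr hcase.le)
      · exact h
    have hUmax : ∀ u ∈ A ∪ B, u ≤ b1 := by
      intro u hu
      rcases Finset.mem_union.mp hu with h | h
      · exact le_trans (A.le_max' u h) hcase.le
      · exact B.le_max' u h
    -- min/max facts for C and D
    have hminC : C.min' hCne = a0 :=
      le_antisymm (C.min'_le a0 ha0C) (Finset.le_min' _ _ _ fun y hy => hUmin y (hCU hy))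
    have hmaxC : C.max' hCne < a1 := hClt _ (C.max'_mem hCne)
    have hmaxD : D.max' hDne = b1 :=
      le_antisymm (Finset.max'_le _ _ _ fun y hy => hUmax y (hDU hy)) (D.le_max' b1 hb1D)
    have hminD : b0 ≤ D.min' hDne := Finset.le_min' _ _ _ fun y hy => hDge y hy
    refine ⟨C, D, hCne, hDne, hdisj, hunion, ?_, ?_⟩
    · rw [rng_eq_s15 α C hCne, rng_eq_s15 α D hDne, rng_eq_s15 α A hA, rng_eq_s15 α B hB,
        sup'_alpha α hα, sup'_alpha α hα, sup'_alpha α hα, sup'_alpha α hα,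
        inf'_alpha α hα, inf'_alpha α hα, inf'_alpha α hα, inf'_alpha α hα,
        hcardC, hcardD]
      have e1 : α (C.max' hCne) - α (C.min' hCne) ≤ α a1 - α a0 := by
        have := hα.monotone hmaxC.le
        have := hα.monotone ((hminC ▸ le_refl a0) : a0 ≤ C.min' hCne)
        rw [hminC]
        linarith [hα.monotone hmaxC.le]
      have e2 : α (D.max' hDne) - α (D.min' hDne) ≤ α b1 - α b0 := by
        rw [hmaxD]
        linarith [hα.monotone hminD]
      have n1 : 0 ≤ α (C.max' hCne) - α (C.min' hCne) := by
        have := hα.monotone (C.min'_le _ (C.max'_mem hCne))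
        linarith
      have n2 : 0 ≤ α (D.max' hDne) - α (D.min' hDne) := by
        have := hα.monotone (D.min'_le _ (D.max'_mem hDne))
        linarith
      exact add_le_add (div_le_div₀ (le_trans n1 e1) e1 hfA le_rfl)
        (div_le_div₀ (le_trans n2 e2) e2 hfB le_rfl)
    · rw [phiS_eq C hCne, phiS_eq D hDne, phiS_eq A hA, phiS_eq B hB, hminC, hmaxD]
      have l1 : (C.max' hCne).val - a0.val < a1.val - a0.val := by
        have h3 : a0 ≤ C.max' hCne := hminC ▸ C.min'_le _ (C.max'_mem hCne)
        have h4 : (C.max' hCne).val < a1.val := hmaxC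
        have h5 : a0.val ≤ (C.max' hCne).val := h3
        omega
      have l2 : b1.val - (D.min' hDne).val ≤ b1.val - b0.val := by
        have : b0.val ≤ (D.min' hDne).val := hminD
        omega
      omega
  · -- nested case : b1 < a1; C = {a0}, D = (A ∪ B).erase a0
    refine ⟨{a0}, (A ∪ B).erase a0, Finset.singleton_nonempty a0, ?_, ?_, ?_, ?_, ?_⟩
    · exact ⟨a1, Finset.mem_erase.mpr ⟨ne_of_gt ha01, Finset.mem_union_left _ (A.max'_mem hA)⟩⟩
    · exact Finset.disjoint_singleton_left.mpr (Finset.notMem_erase _ _)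
    · rw [← Finset.insert_eq, Finset.insert_erase (Finset.mem_union_left _ (A.min'_mem hA))]
    · -- cost inequality
      have hDne : ((A ∪ B).erase a0).Nonempty :=
        ⟨a1, Finset.mem_erase.mpr ⟨ne_of_gt ha01, Finset.mem_union_left _ (A.max'_mem hA)⟩⟩
      have hrngC : rng α {a0} = 0 := by
        rw [rng_eq_s15 α _ (Finset.singleton_nonempty a0)]
        simp
      have hUmax : ∀ u ∈ A ∪ B, u ≤ a1 := by
        intro u hu
        rcases Finset.mem_union.mp hu with h | h
        · exact A.le_max' u h
        · exact le_trans (B.le_max' u h) hcase.le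
      have hsup : ((A ∪ B).erase a0).sup' hDne α ≤ α a1 :=
        Finset.sup'_le _ _ fun y hy => hα.monotone (hUmax y (Finset.mem_of_mem_erase hy))
      have hinf : α a0 ≤ ((A ∪ B).erase a0).inf' hDne α :=
        Finset.le_inf' _ _ fun y hy => hα.monotone (hUmin y (Finset.mem_of_mem_erase hy))
      have hcardD : ((A ∪ B).erase a0).card = A.card + B.card - 1 := by
        rw [Finset.card_erase_of_mem (Finset.mem_union_left _ (A.min'_mem hA)),
          Finset.card_union_of_disjoint hd]
      have hcardge : A.card ≤ ((A ∪ B).erase a0).card := by omega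
      have hrngD : rng α ((A ∪ B).erase a0) ≤ rng α A := by
        rw [rng_eq_s15 α _ hDne, rng_eq_s15 α A hA, sup'_alpha α hα A hA, inf'_alpha α hα A hA, ← ha1, ← ha0]
        linarith
      have hfD : 0 < f ((A ∪ B).erase a0).card := hfpos _ (by omega)
      have t1 : rng α ((A ∪ B).erase a0) / f ((A ∪ B).erase a0).card ≤
          rng α A / f A.card :=
        div_le_div₀ (le_trans (rng_nonneg α _) hrngD) hrngD hfA (hfmono hcardge)
      have t2 : 0 ≤ rng α B / f B.card := div_nonneg (rng_nonneg α B) hfB.le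
      rw [hrngC, zero_div]
      linarith
    · -- potential inequality
      have hDne : ((A ∪ B).erase a0).Nonempty :=
        ⟨a1, Finset.mem_erase.mpr ⟨ne_of_gt ha01, Finset.mem_union_left _ (A.max'_mem hA)⟩⟩
      have hphiC : phiS ({a0} : Finset (Fin n)) = 0 := by
        rw [phiS_eq _ (Finset.singleton_nonempty a0)]
        simp
      have hUmax : ∀ u ∈ A ∪ B, u ≤ a1 := by
        intro u hu
        rcases Finset.mem_union.mp hu with h | h
        · exact A.le_max' u h
        · exact le_trans (B.le_max' u h) hcase.le
      have hmaxD : ((A ∪ B).erase a0).max' hDne ≤ a1 :=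
        Finset.max'_le _ _ _ fun y hy => hUmax y (Finset.mem_of_mem_erase hy)
      have hminD : a0 < ((A ∪ B).erase a0).min' hDne := by
        have hmem := ((A ∪ B).erase a0).min'_mem hDne
        exact lt_of_le_of_ne (hUmin _ (Finset.mem_of_mem_erase hmem))
          (Ne.symm (Finset.ne_of_mem_erase hmem))
      rw [hphiC, phiS_eq _ hDne, phiS_eq A hA, phiS_eq B hB]
      have h5 : (((A ∪ B).erase a0).max' hDne).val ≤ a1.val := hmaxD
      have h6 : a0.val < (((A ∪ B).erase a0).min' hDne).val := hminD
      have h7 : a0.val < a1.val := ha01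
      omega

lemma glue {n k : ℕ} (α : Fin n → ℝ) (f : ℕ → ℝ)
    (Q : Fin k → Finset (Fin n)) (hQ : IsPartition Q) (i j : Fin k) (hij : i ≠ j)
    (C D : Finset (Fin n)) (hC : C.Nonempty) (hD : D.Nonempty) (hCD : Disjoint C D)
    (hU : C ∪ D = Q i ∪ Q j)
    (hcost : rng α C / f C.card + rng α D / f D.card ≤
      rng α (Q i) / f (Q i).card + rng α (Q j) / f (Q j).card)
    (hphi : phiS C + phiS D < phiS (Q i) + phiS (Q j)) :
    ∃ Q' : Fin k → Finset (Fin n), IsPartition Q' ∧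
      (∑ t, rng α (Q' t) / f (Q' t).card ≤ ∑ t, rng α (Q t) / f (Q t).card) ∧
      Phi Q' < Phi Q := by
  classical
  set Q' := Function.update (Function.update Q i C) j D with hQ'def
  have hval : ∀ t, Q' t = if t = j then D else if t = i then C else Q t := by
    intro t
    simp [hQ'def, Function.update_apply]
  have hmemi : i ∈ (univ : Finset (Fin k)).erase j :=
    Finset.mem_erase.mpr ⟨hij, Finset.mem_univ i⟩
  have hQ'j : Q' j = D := by rw [hval]; simp
  have hQ'i : Q' i = C := by rw [hval, if_neg hij, if_pos rfl]
  have hrest : ∀ t ∈ ((univ : Finset (Fin k)).erase j).erase i, Q' t = Q t := by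
    intro t ht
    obtain ⟨hti, ht2⟩ := Finset.mem_erase.mp ht
    obtain ⟨htj, _⟩ := Finset.mem_erase.mp ht2
    rw [hval t, if_neg htj, if_neg hti]
  have hCsub : C ⊆ Q i ∪ Q j := hU ▸ Finset.subset_union_left
  have hDsub : D ⊆ Q i ∪ Q j := hU ▸ Finset.subset_union_right
  have hdisjU : ∀ u, u ≠ i → u ≠ j → Disjoint (Q i ∪ Q j) (Q u) := fun u hui huj =>
    Finset.disjoint_union_left.mpr ⟨hQ.2.1 i u (Ne.symm hui), hQ.2.1 j u (Ne.symm huj)⟩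
  refine ⟨Q', ⟨?_, ?_, ?_⟩, ?_, ?_⟩
  · intro t
    rw [hval]
    split_ifs with h1 h2
    · exact hD
    · exact hC
    · exact hQ.1 t
  · intro s t hst
    rw [hval s, hval t]
    split_ifs with h1 h2 h3 h4 h5 h6 h7 h8
    · exact absurd (h1.trans h2.symm) hst
    · exact hCD.symm
    · exact (hdisjU t ‹t ≠ i› ‹t ≠ j›).mono_left hDsub
    · exact hCD
    · exact absurd (‹s = i›.trans ‹t = i›.symm) hst
    · exact (hdisjU t ‹t ≠ i› ‹t ≠ j›).mono_left hCsub
    · exact ((hdisjU s ‹s ≠ i› ‹s ≠ j›).mono_left hDsub).symm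
    · exact ((hdisjU s ‹s ≠ i› ‹s ≠ j›).mono_left hCsub).symm
    · exact hQ.2.1 s t hst
  · intro v
    obtain ⟨t, hv⟩ := hQ.2.2 v
    by_cases htj : t = j
    · subst htj
      have : v ∈ C ∪ D := hU ▸ Finset.mem_union_right _ hv
      rcases Finset.mem_union.mp this with h | h
      · exact ⟨i, hQ'i ▸ h⟩
      · exact ⟨t, hQ'j ▸ h⟩
    · by_cases hti : t = i
      · subst hti
        have : v ∈ C ∪ D := hU ▸ Finset.mem_union_left _ hv
        rcases Finset.mem_union.mp this with h | h
        · exact ⟨t, hQ'i ▸ h⟩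
        · exact ⟨j, hQ'j ▸ h⟩
      · refine ⟨t, ?_⟩
        rw [hval t, if_neg htj, if_neg hti]
        exact hv
  · have c1 : ∑ t, rng α (Q' t) / f (Q' t).card
        = rng α D / f D.card + (rng α C / f C.card +
          ∑ t ∈ ((univ : Finset (Fin k)).erase j).erase i, rng α (Q t) / f (Q t).card) := by
      rw [← Finset.add_sum_erase _ (fun t => rng α (Q' t) / f (Q' t).card) (Finset.mem_univ j)]
      rw [hQ'j]
      congr 1
      rw [← Finset.add_sum_erase _ (fun t => rng α (Q' t) / f (Q' t).card) hmemi]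
      rw [hQ'i]
      congr 1
      exact Finset.sum_congr rfl fun t ht => by rw [hrest t ht]
    have c2 : ∑ t, rng α (Q t) / f (Q t).card
        = rng α (Q j) / f (Q j).card + (rng α (Q i) / f (Q i).card +
          ∑ t ∈ ((univ : Finset (Fin k)).erase j).erase i, rng α (Q t) / f (Q t).card) := by
      rw [← Finset.add_sum_erase _ (fun t => rng α (Q t) / f (Q t).card) (Finset.mem_univ j)]
      congr 1
      rw [← Finset.add_sum_erase _ (fun t => rng α (Q t) / f (Q t).card) hmemi]
    rw [c1, c2]
    linarith
  · have c1 : Phi Q' = phiS D + (phiS C +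
          ∑ t ∈ ((univ : Finset (Fin k)).erase j).erase i, phiS (Q t)) := by
      unfold Phi
      rw [← Finset.add_sum_erase _ (fun t => phiS (Q' t)) (Finset.mem_univ j)]
      rw [hQ'j]
      congr 1
      rw [← Finset.add_sum_erase _ (fun t => phiS (Q' t)) hmemi]
      rw [hQ'i]
      congr 1
      exact Finset.sum_congr rfl fun t ht => by rw [hrest t ht]
    have c2 : Phi Q = phiS (Q j) + (phiS (Q i) +
          ∑ t ∈ ((univ : Finset (Fin k)).erase j).erase i, phiS (Q t)) := by
      unfold Phi
      rw [← Finset.add_sum_erase _ (fun t => phiS (Q t)) (Finset.mem_univ j)]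
      congr 1
      rw [← Finset.add_sum_erase _ (fun t => phiS (Q t)) hmemi]
    rw [c1, c2]
    omega

lemma step {n k : ℕ} (α : Fin n → ℝ) (hα : StrictMono α) (f : ℕ → ℝ)
    (hfpos : ∀ m : ℕ, 0 < m → 0 < f m) (hfmono : Monotone f)
    (Q : Fin k → Finset (Fin n)) (hQ : IsPartition Q) (hns : ¬ SepP Q) :
    ∃ Q' : Fin k → Finset (Fin n), IsPartition Q' ∧
      (∑ t, rng α (Q' t) / f (Q' t).card ≤ ∑ t, rng α (Q t) / f (Q t).card) ∧
      Phi Q' < Phi Q := by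
  classical
  unfold SepP at hns
  push_neg at hns
  obtain ⟨i, j, hij, hns1, hns2⟩ := hns
  obtain ⟨x1, hx1, y1, hy1, hyx⟩ := hns1
  obtain ⟨x2, hx2, y2, hy2, hxy⟩ := hns2
  have hdisj := hQ.2.1 i j hij
  have hyx' : y1 < x1 := lt_of_le_of_ne hyx
    (fun h => Finset.disjoint_left.mp hdisj hx1 (h ▸ hy1))
  have hxy' : x2 < y2 := lt_of_le_of_ne hxy
    (fun h => Finset.disjoint_left.mp hdisj (h ▸ hx2) hy2)
  have hne : (Q i).min' (hQ.1 i) ≠ (Q j).min' (hQ.1 j) := by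
    intro h
    exact Finset.disjoint_left.mp hdisj ((Q i).min'_mem (hQ.1 i))
      (h ▸ (Q j).min'_mem (hQ.1 j))
  rcases hne.lt_or_gt with hlt | hlt
  · have h2 : (Q j).min' (hQ.1 j) < (Q i).max' (hQ.1 i) :=
      lt_of_le_of_lt ((Q j).min'_le y1 hy1) (lt_of_lt_of_le hyx' ((Q i).le_max' x1 hx1))
    obtain ⟨C, D, hC, hD, hCD, hU, hcost, hphi⟩ :=
      pair_step α hα f hfpos hfmono (Q i) (Q j) (hQ.1 i) (hQ.1 j) hdisj hlt h2
    exact glue α f Q hQ i j hij C D hC hD hCD hU hcost hphi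
  · have h2 : (Q i).min' (hQ.1 i) < (Q j).max' (hQ.1 j) :=
      lt_of_le_of_lt ((Q i).min'_le x2 hx2) (lt_of_lt_of_le hxy' ((Q j).le_max' y2 hy2))
    obtain ⟨C, D, hC, hD, hCD, hU, hcost, hphi⟩ :=
      pair_step α hα f hfpos hfmono (Q j) (Q i) (hQ.1 j) (hQ.1 i) hdisj.symm hlt h2
    exact glue α f Q hQ j i hij.symm C D hC hD hCD hU hcost hphi

lemma descent {n k : ℕ} (α : Fin n → ℝ) (hα : StrictMono α) (f : ℕ → ℝ)
    (hfpos : ∀ m : ℕ, 0 < m → 0 < f m) (hfmono : Monotone f) :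
    ∀ (N : ℕ) (Q : Fin k → Finset (Fin n)), IsPartition Q → Phi Q ≤ N →
    ∃ S : Fin k → Finset (Fin n), IsPartition S ∧ SepP S ∧
      ∑ t, rng α (S t) / f (S t).card ≤ ∑ t, rng α (Q t) / f (Q t).card := by
  intro N
  induction N with
  | zero =>
    intro Q hQ hφ
    by_cases hs : SepP Q
    · exact ⟨Q, hQ, hs, le_rfl⟩
    · obtain ⟨Q', _, _, h3⟩ := step α hα f hfpos hfmono Q hQ hs
      omega
  | succ N ih =>
    intro Q hQ hφ
    by_cases hs : SepP Q
    · exact ⟨Q, hQ, hs, le_rfl⟩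
    · obtain ⟨Q', h1, h2, h3⟩ := step α hα f hfpos hfmono Q hQ hs
      obtain ⟨S, hS1, hS2, hS3⟩ := ih Q' h1 (by omega)
      exact ⟨S, hS1, hS2, le_trans hS3 h2⟩

/-- There is an optimal `k`-partition for the min `k`-normalized range sum problem whose
sets are non-overlapping in values: `max(Sᵢ) < min(Sᵢ₊₁)` for all `i`. -/
theorem stmt15 (n : ℕ) (hn : 2 ≤ n) (α : Fin n → ℝ) (hα : StrictMono α)
    (f : ℕ → ℝ) (hfpos : ∀ m : ℕ, 0 < m → 0 < f m) (hfmono : Monotone f)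
    (k : ℕ) (hk : 2 ≤ k) (hkn : k ≤ n) :
    ∃ P : Fin k → Finset (Fin n), IsPartition P ∧
      (∀ i : Fin k, ∀ h : i.val + 1 < k,
        ∀ a ∈ P i, ∀ b ∈ P ⟨i.val + 1, h⟩, α a < α b) ∧
      ∀ Q : Fin k → Finset (Fin n), IsPartition Q →
        ∑ i, rng α (P i) / f (P i).card ≤ ∑ i, rng α (Q i) / f (Q i).card := by
  classical
  -- an explicit separated partition
  set E : Fin k → Finset (Fin n) :=
    fun i => univ.filter (fun v : Fin n => min v.val (k-1) = i.val) with hE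
  have hEpart : IsPartition E := by
    refine ⟨?_, ?_, ?_⟩
    · intro i
      refine ⟨⟨i.val, lt_of_lt_of_le i.isLt hkn⟩, Finset.mem_filter.mpr ⟨Finset.mem_univ _, ?_⟩⟩
      have := i.isLt
      simp only
      omega
    · intro i j hij
      rw [Finset.disjoint_left]
      intro v hv hv'
      have h1 := (Finset.mem_filter.mp hv).2
      have h2 := (Finset.mem_filter.mp hv').2
      exact hij (Fin.ext (h1 ▸ h2 ▸ rfl))
    · intro v
      have hk0 : 0 < k := by omega
      refine ⟨⟨min v.val (k-1), by omega⟩, Finset.mem_filter.mpr ⟨Finset.mem_univ _, rfl⟩⟩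
  have hEsep : SepP E := by
    intro i j hij
    have hvij : i.val ≠ j.val := fun h => hij (Fin.ext h)
    have hjk := j.isLt
    have hik := i.isLt
    rcases hvij.lt_or_gt with h | h
    · left
      intro a ha b hb
      have h1 := (Finset.mem_filter.mp ha).2
      have h2 := (Finset.mem_filter.mp hb).2
      rw [Fin.lt_def]
      omega
    · right
      intro a ha b hb
      have h1 := (Finset.mem_filter.mp ha).2
      have h2 := (Finset.mem_filter.mp hb).2
      rw [Fin.lt_def]
      omega
  set T : Finset (Fin k → Finset (Fin n)) :=
    univ.filter (fun S => IsPartition S ∧ SepP S) with hT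
  have hTne : T.Nonempty :=
    ⟨E, Finset.mem_filter.mpr ⟨Finset.mem_univ _, hEpart, hEsep⟩⟩
  obtain ⟨P₀, hP₀T, hP₀min⟩ :=
    T.exists_min_image (fun S => ∑ i, rng α (S i) / f (S i).card) hTne
  obtain ⟨hP₀part, hP₀sep⟩ := (Finset.mem_filter.mp hP₀T).2
  set g : Fin k → Fin n := fun i => (P₀ i).min' (hP₀part.1 i) with hg
  have hginj : Function.Injective g := by
    intro i j hijg
    by_contra hij
    have hm : g j ∈ P₀ j := (P₀ j).min'_mem (hP₀part.1 j)
    rw [← hijg] at hm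
    exact Finset.disjoint_left.mp (hP₀part.2.1 i j hij) ((P₀ i).min'_mem (hP₀part.1 i)) hm
  set σ := Tuple.sort g with hσ
  have hstrict : StrictMono (g ∘ σ) :=
    (Tuple.monotone_sort g).strictMono_of_injective (hginj.comp σ.injective)
  refine ⟨P₀ ∘ σ, ⟨fun i => hP₀part.1 _, fun i j hij => hP₀part.2.1 _ _
    (fun h => hij (σ.injective h)), fun v => ?_⟩, ?_, ?_⟩
  · obtain ⟨t, ht⟩ := hP₀part.2.2 v
    refine ⟨σ.symm t, ?_⟩
    show v ∈ P₀ (σ (σ.symm t))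
    rw [Equiv.apply_symm_apply]
    exact ht
  · intro i h a ha b hb
    have hlt : g (σ i) < g (σ ⟨i.val + 1, h⟩) := by
      apply hstrict
      rw [Fin.lt_def]
      simp
    have hne : σ i ≠ σ ⟨i.val + 1, h⟩ := by
      intro hC
      rw [hC] at hlt
      exact lt_irrefl _ hlt
    rcases hP₀sep (σ i) (σ ⟨i.val + 1, h⟩) hne with hcase | hcase
    · exact hα (hcase a ha b hb)
    · exfalso
      have := hcase (g (σ i)) ((P₀ (σ i)).min'_mem _)
        (g (σ ⟨i.val + 1, h⟩)) ((P₀ (σ ⟨i.val + 1, h⟩)).min'_mem _)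
      exact lt_irrefl _ (lt_trans hlt this)
  · intro Q hQ
    obtain ⟨S, hS1, hS2, hS3⟩ := descent α hα f hfpos hfmono (Phi Q) Q hQ le_rfl
    have hSmem : S ∈ T := Finset.mem_filter.mpr ⟨Finset.mem_univ _, hS1, hS2⟩
    have hle := hP₀min S hSmem
    calc ∑ i, rng α ((P₀ ∘ σ) i) / f ((P₀ ∘ σ) i).card
        = ∑ i, rng α (P₀ i) / f (P₀ i).card :=
          Equiv.sum_comp σ (fun t => rng α (P₀ t) / f (P₀ t).card)
      _ ≤ _ := le_trans hle hS3
end
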